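/- For every nonnegative integer n, the number of prime non-overlined parts (counted with multiplicity) in all the overpartitions of n equals ∑_{j=2}^{n} ω(j) · p̄(n−j), where ω(j) is the number of distinct prime divisors of j. -/

import Mathlib

/-- An overpartition of `n`: a pair consisting of a multiset of overlined parts (pairwise
distinct) and a multiset of non-overlined parts, all parts positive, with total sum `n`. -/
structure Overpartition (n : ℕ) where
  overlined : Multiset ℕ
  nonoverlined : Multiset ℕ
  overlined_nodup : overlined.Nodup
  overlined_pos : ∀ i ∈ overlined, 0 < i
  nonoverlined_pos : ∀ i ∈ nonoverlined, 0 < i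
  parts_sum : overlined.sum + nonoverlined.sum = n

/-- There are only finitely many overpartitions of `n`. -/
instance (n : ℕ) : Finite (Overpartition n) := by
  classical
  set big : Multiset ℕ := n • ((Multiset.range (n + 1))) with hbig
  have key : ∀ (m : Multiset ℕ), (∀ i ∈ m, 0 < i) → m.sum ≤ n → m ≤ big := by
    intro m hpos hsum
    rw [Multiset.le_iff_count]
    intro a
    rw [hbig, Multiset.count_nsmul]
    by_cases ha : a ∈ m
    · have ha1 : 0 < a := hpos a ha
      have hale : a ≤ m.sum := Multiset.le_sum_of_mem ha
      have hcard : m.card ≤ m.sum := by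
        have := Multiset.card_nsmul_le_sum (s := m) (a := 1) (fun i hi => hpos i hi)
        simpa using this
      have hcnt : m.count a ≤ m.card := Multiset.count_le_card a m
      have haa : a ∈ Multiset.range (n + 1) := Multiset.mem_range.2 (by omega)
      have h1 : Multiset.count a (Multiset.range (n + 1)) = 1 :=
        Multiset.count_eq_one_of_mem (Multiset.nodup_range _) haa
      rw [h1]
      omega
    · simp [Multiset.count_eq_zero.2 ha]
  have hinj : Function.Injective (fun o : Overpartition n =>
      ((⟨o.overlined, Multiset.mem_powerset.2
          (key _ o.overlined_pos (by have := o.parts_sum; omega))⟩,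
        ⟨o.nonoverlined, Multiset.mem_powerset.2
          (key _ o.nonoverlined_pos (by have := o.parts_sum; omega))⟩) :
        {m // m ∈ big.powerset} × {m // m ∈ big.powerset})) := by
    intro a b h
    cases a; cases b
    simp_all
  exact Finite.of_injective _ hinj

/-- `S k n`: the total number of non-overlined parts equal to `k`, counted with
multiplicity, in all the overpartitions of `n`. -/
noncomputable def S (k n : ℕ) : ℕ := ∑ᶠ o : Overpartition n, o.nonoverlined.count k

/-- `pbar n`: the number of overpartitions of `n` (`pbar 0 = 1`). -/
noncomputable def pbar (n : ℕ) : ℕ := Nat.card (Overpartition n)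

/-- The multiset of all parts (overlined and non-overlined) of an overpartition. -/
def Overpartition.parts {n : ℕ} (o : Overpartition n) : Multiset ℕ :=
  o.overlined + o.nonoverlined

/-- `Mbar k n`: the number of overpartitions of `n` in which the first (i.e. largest) part
larger than `k` appears at least `k + 1` times. -/
noncomputable def Mbar (k n : ℕ) : ℕ :=
  Nat.card {o : Overpartition n // ∃ s ∈ o.parts, k < s ∧
    (∀ t ∈ o.parts, k < t → t ≤ s) ∧ k + 1 ≤ o.parts.count s}

/-- `A(χ,1,0;m) = ∑_{k=1}^{m} S(k,m) χ(k)`, the number of prime non-overlined parts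
(counted with multiplicity) in all the overpartitions of `m`. -/
noncomputable def Achi (m : ℕ) : ℕ :=
  ∑ k ∈ Finset.Icc 1 m, S k m * (if Nat.Prime k then 1 else 0)

/-- `A(χ,1,0;·)` extended to integer arguments: terms with negative argument are zero. -/
noncomputable def Achiz (m : ℤ) : ℤ := if 0 ≤ m then (Achi m.toNat : ℤ) else 0

section Helpers

noncomputable instance (n : ℕ) : Fintype (Overpartition n) := Fintype.ofFinite _

lemma multiset_sum_le_of_le {s t : Multiset ℕ} (h : s ≤ t) : s.sum ≤ t.sum := by
  obtain ⟨u, rfl⟩ := Multiset.le_iff_exists_add.1 h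
  simp

theorem Overpartition.ext' {n : ℕ} {a b : Overpartition n}
    (h1 : a.overlined = b.overlined) (h2 : a.nonoverlined = b.nonoverlined) : a = b := by
  cases a; cases b; simp_all

lemma replicate_le_nonoverlined {n k m : ℕ} (o : Overpartition n)
    (h : m ≤ o.nonoverlined.count k) : Multiset.replicate m k ≤ o.nonoverlined := by
  rw [Multiset.le_iff_count]
  intro a
  rw [Multiset.count_replicate]
  split <;> simp_all

noncomputable def removeEquiv {n k m : ℕ} (hk : 0 < k) (hmk : m * k ≤ n) :
    {o : Overpartition n // m ≤ o.nonoverlined.count k} ≃ Overpartition (n - m * k) where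
  toFun o := by
    refine ⟨o.1.overlined, o.1.nonoverlined - Multiset.replicate m k, o.1.overlined_nodup,
      o.1.overlined_pos, ?_, ?_⟩
    · intro i hi
      exact o.1.nonoverlined_pos i (Multiset.mem_of_le (Multiset.sub_le_self _ _) hi)
    · have hle := replicate_le_nonoverlined o.1 o.2
      have hsum : (o.1.nonoverlined - Multiset.replicate m k).sum + m * k
          = o.1.nonoverlined.sum := by
        have := tsub_add_cancel_of_le hle
        calc (o.1.nonoverlined - Multiset.replicate m k).sum + m * k
            = (o.1.nonoverlined - Multiset.replicate m k).sum
              + (Multiset.replicate m k).sum := by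
              rw [Multiset.sum_replicate, smul_eq_mul]
          _ = ((o.1.nonoverlined - Multiset.replicate m k) + Multiset.replicate m k).sum := by
              rw [Multiset.sum_add]
          _ = o.1.nonoverlined.sum := by rw [this]
      have := o.1.parts_sum
      omega
  invFun o := by
    refine ⟨⟨o.overlined, o.nonoverlined + Multiset.replicate m k, o.overlined_nodup,
      o.overlined_pos, ?_, ?_⟩, ?_⟩
    · intro i hi
      rcases Multiset.mem_add.1 hi with h | h
      · exact o.nonoverlined_pos i h
      · have := Multiset.eq_of_mem_replicate h
        omega
    · have hsum : (o.nonoverlined + Multiset.replicate m k).sum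
          = o.nonoverlined.sum + m * k := by
        rw [Multiset.sum_add, Multiset.sum_replicate, smul_eq_mul]
      have := o.parts_sum
      simp only [hsum]
      omega
    · rw [Multiset.count_add, Multiset.count_replicate, if_pos rfl]
      omega
  left_inv o := by
    refine Subtype.ext (Overpartition.ext' rfl ?_)
    show (o.1.nonoverlined - Multiset.replicate m k) + Multiset.replicate m k
        = o.1.nonoverlined
    exact tsub_add_cancel_of_le (replicate_le_nonoverlined o.1 o.2)
  right_inv o := by
    refine Overpartition.ext' rfl ?_
    show (o.nonoverlined + Multiset.replicate m k) - Multiset.replicate m k = o.nonoverlined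
    rw [Multiset.ext]
    intro a
    rw [Multiset.count_sub, Multiset.count_add]
    omega

lemma card_eq_zero_of_large {n k m : ℕ} (hk : 0 < k) (hm : 0 < m) (h : n < m * k) :
    Nat.card {o : Overpartition n // m ≤ o.nonoverlined.count k} = 0 := by
  have : IsEmpty {o : Overpartition n // m ≤ o.nonoverlined.count k} := by
    constructor
    rintro ⟨o, ho⟩
    have hle := replicate_le_nonoverlined o ho
    have h1 : (Multiset.replicate m k).sum ≤ o.nonoverlined.sum :=
      multiset_sum_le_of_le hle
    rw [Multiset.sum_replicate, smul_eq_mul] at h1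
    have := o.parts_sum
    omega
  simp [Nat.card_of_isEmpty]

lemma count_le {n k : ℕ} (hk : 0 < k) (o : Overpartition n) :
    o.nonoverlined.count k ≤ n := by
  have hle := replicate_le_nonoverlined o (le_refl (o.nonoverlined.count k))
  have h1 : (Multiset.replicate (o.nonoverlined.count k) k).sum ≤ o.nonoverlined.sum :=
    multiset_sum_le_of_le hle
  rw [Multiset.sum_replicate, smul_eq_mul] at h1
  have h2 := o.parts_sum
  have h3 : o.nonoverlined.count k ≤ o.nonoverlined.count k * k :=
    Nat.le_mul_of_pos_right _ hk
  omega

lemma S_eq (k n : ℕ) (hk : 0 < k) :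
    S k n = ∑ m ∈ Finset.Icc 1 n,
      Nat.card {o : Overpartition n // m ≤ o.nonoverlined.count k} := by
  classical
  rw [S, finsum_eq_sum_of_fintype]
  have key : ∀ o : Overpartition n, o.nonoverlined.count k
      = ∑ m ∈ Finset.Icc 1 n, (if m ≤ o.nonoverlined.count k then 1 else 0) := by
    intro o
    rw [← Finset.card_filter]
    have : (Finset.Icc 1 n).filter (fun m => m ≤ o.nonoverlined.count k)
        = Finset.Icc 1 (o.nonoverlined.count k) := by
      ext m
      have := count_le hk o
      simp only [Finset.mem_filter, Finset.mem_Icc]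
      omega
    rw [this, Nat.card_Icc]
    omega
  rw [Finset.sum_congr rfl fun o _ => key o, Finset.sum_comm]
  refine Finset.sum_congr rfl fun m _ => ?_
  rw [Nat.card_eq_fintype_card, Fintype.card_subtype, Finset.card_filter]

lemma S_eq' (k n : ℕ) (hk : 0 < k) :
    S k n = ∑ m ∈ Finset.Icc 1 n,
      (if m * k ≤ n then pbar (n - m * k) else 0) := by
  rw [S_eq k n hk]
  refine Finset.sum_congr rfl fun m hm => ?_
  rw [Finset.mem_Icc] at hm
  split_ifs with h
  · rw [Nat.card_congr (removeEquiv hk h)]; rfl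
  · exact card_eq_zero_of_large hk (by omega) (by omega)

end Helpers

theorem stmt12 (n : ℕ) :
    Achi n = ∑ j ∈ Finset.Icc 2 n, (Nat.primeFactors j).card * pbar (n - j) := by
  classical
  have step1 : Achi n = ∑ q ∈ (Finset.Icc 1 n ×ˢ Finset.Icc 1 n).filter
      (fun q : ℕ × ℕ => q.1.Prime ∧ q.2 * q.1 ≤ n), pbar (n - q.2 * q.1) := by
    rw [Achi]
    have h1 : ∀ k ∈ Finset.Icc 1 n, S k n * (if Nat.Prime k then 1 else 0)
        = ∑ m ∈ Finset.Icc 1 n,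
          (if Nat.Prime k ∧ m * k ≤ n then pbar (n - m * k) else 0) := by
      intro k hk
      rw [Finset.mem_Icc] at hk
      by_cases hp : Nat.Prime k
      · rw [if_pos hp, mul_one, S_eq' k n (by omega)]
        refine Finset.sum_congr rfl fun m _ => ?_
        by_cases h : m * k ≤ n <;> simp [h, hp]
      · simp [hp]
    rw [Finset.sum_congr rfl h1, ← Finset.sum_product', Finset.sum_filter]
  have step2 : ∑ j ∈ Finset.Icc 2 n, (Nat.primeFactors j).card * pbar (n - j)
      = ∑ x ∈ (Finset.Icc 2 n).sigma (fun j => j.primeFactors), pbar (n - x.1) := by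
    rw [Finset.sum_sigma]
    exact Finset.sum_congr rfl fun j _ => by dsimp only; rw [Finset.sum_const, smul_eq_mul]
  rw [step1, step2]
  refine Finset.sum_nbij' (i := fun q => ⟨q.2 * q.1, q.1⟩)
    (j := fun x => (x.2, x.1 / x.2)) ?_ ?_ ?_ ?_ ?_
  · rintro ⟨k, m⟩ hq
    dsimp only at *
    rw [Finset.mem_filter, Finset.mem_product, Finset.mem_Icc, Finset.mem_Icc] at hq
    obtain ⟨⟨⟨hk1, hk2⟩, hm1, hm2⟩, hp, hle⟩ := hq
    rw [Finset.mem_sigma, Finset.mem_Icc]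
    dsimp only
    refine ⟨⟨?_, hle⟩, ?_⟩
    · have h2 := hp.two_le
      have : k ≤ m * k := Nat.le_mul_of_pos_left k (by omega)
      omega
    · exact Nat.mem_primeFactors.2 ⟨hp, dvd_mul_left k m, by positivity⟩
  · rintro ⟨j, p⟩ hx
    dsimp only at *
    rw [Finset.mem_sigma, Finset.mem_Icc] at hx
    obtain ⟨⟨hj2, hjn⟩, hpf⟩ := hx
    obtain ⟨hp, hdvd, hj0⟩ := Nat.mem_primeFactors.1 hpf
    dsimp only at hj2 hjn hdvd hj0 hp
    rw [Finset.mem_filter, Finset.mem_product, Finset.mem_Icc, Finset.mem_Icc]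
    dsimp only
    have hple : p ≤ j := Nat.le_of_dvd (by omega) hdvd
    have hdp : j / p * p = j := Nat.div_mul_cancel hdvd
    have hdpos : 0 < j / p := Nat.div_pos hple hp.pos
    refine ⟨⟨⟨hp.one_lt.le.trans' (by omega), by omega⟩, by omega,
      (Nat.div_le_self j p).trans hjn⟩, hp, ?_⟩
    rw [hdp]; omega
  · rintro ⟨k, m⟩ hq
    dsimp only at *
    rw [Finset.mem_filter, Finset.mem_product, Finset.mem_Icc, Finset.mem_Icc] at hq
    have hk : 0 < k := hq.2.1.pos
    simp [Nat.mul_div_cancel _ hk]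
  · rintro ⟨j, p⟩ hx
    rw [Finset.mem_sigma, Finset.mem_Icc] at hx
    obtain ⟨hp, hdvd, hj0⟩ := Nat.mem_primeFactors.1 hx.2
    simp [Nat.div_mul_cancel hdvd]
  · rintro ⟨k, m⟩ _
    rfl
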